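/- Let V : ℝ → ℝ satisfy the Zygmund condition with constant C and be normalized to vanish at 0 and 1 and satisfy V(x) = O(|x| log|x|) as |x| → ∞. Define the cross-ratio norm ‖V‖_cr = sup over quadruples a < b < c < d with (c−b)(d−a)/((b−a)(d−c)) = 1 of |(V(c)−V(b))/(c−b) + (V(d)−V(a))/(d−a) − (V(b)−V(a))/(b−a) − (V(d)−V(c))/(d−c)|. Then ‖V‖_cr ≤ 4C. -/

import Mathlib

/-- Chord bound: a continuous Zygmund function deviates from any chord by at most
`C/2` times the length of the interval. -/
lemma chord_bound_aux (C : ℝ) (hC : 0 ≤ C) (V : ℝ → ℝ) (hcont : Continuous V)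
    (hzyg : ∀ x : ℝ, ∀ t : ℝ, 0 < t → |V (x + t) + V (x - t) - 2 * V x| ≤ C * t)
    {a b x : ℝ} (hab : a < b) (hx : x ∈ Set.Icc a b) :
    |V x - V a - ((x - a) / (b - a)) * (V b - V a)| ≤ C / 2 * (b - a) := by
  have hba : b - a ≠ 0 := sub_ne_zero.2 hab.ne'
  set W : ℝ → ℝ := fun y => V y - V a - ((y - a) / (b - a)) * (V b - V a) with hWdef
  have hWa : W a = 0 := by simp [hWdef]
  have hWb : W b = 0 := by
    simp only [hWdef]
    rw [div_self hba]; ring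
  have hWcont : Continuous W := by
    simp only [hWdef]; fun_prop
  have hWzyg : ∀ y t : ℝ, 0 < t → |W (y + t) + W (y - t) - 2 * W y| ≤ C * t := by
    intro y t ht
    have h := hzyg y t ht
    have heq : W (y + t) + W (y - t) - 2 * W y = V (y + t) + V (y - t) - 2 * V y := by
      simp only [hWdef]
      field_simp
      ring
    rwa [heq]
  obtain ⟨x₀, hx₀, hmax⟩ := isCompact_Icc.exists_isMaxOn (Set.nonempty_Icc.2 hab.le)
    (hWcont.abs.continuousOn)
  have hxle : |W x| ≤ |W x₀| := hmax hx
  have key : |W x₀| ≤ C / 2 * (b - a) := by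
    rcases eq_or_lt_of_le hx₀.1 with h | hax
    · rw [← h, hWa, abs_zero]
      have : (0:ℝ) ≤ b - a := by linarith
      positivity
    rcases eq_or_lt_of_le hx₀.2 with h | hxb
    · rw [h, hWb, abs_zero]
      have : (0:ℝ) ≤ b - a := by linarith
      positivity
    rcases le_total (x₀ - a) (b - x₀) with hle | hle
    · -- t = x₀ - a, left reflection hits a
      have ht : 0 < x₀ - a := by linarith
      have hz := hWzyg x₀ (x₀ - a) ht
      have e1 : x₀ - (x₀ - a) = a := by ring
      rw [e1, hWa] at hz
      have hmem : x₀ + (x₀ - a) ∈ Set.Icc a b := ⟨by linarith, by linarith⟩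
      have h2 : |W (x₀ + (x₀ - a))| ≤ |W x₀| := hmax hmem
      have hB := abs_le.mp h2
      have hA := abs_le.mp hz
      have h5 : |W x₀| ≤ C * (x₀ - a) := by
        rcases le_total 0 (W x₀) with hs | hs
        · rw [abs_of_nonneg hs]
          rw [abs_of_nonneg hs] at hB
          linarith [hA.1, hB.2]
        · rw [abs_of_nonpos hs]
          rw [abs_of_nonpos hs] at hB
          linarith [hA.2, hB.1]
      have h6 : C * (x₀ - a) ≤ C / 2 * (b - a) := by nlinarith
      linarith
    · -- t = b - x₀, right reflection hits b
      have ht : 0 < b - x₀ := by linarith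
      have hz := hWzyg x₀ (b - x₀) ht
      have e1 : x₀ + (b - x₀) = b := by ring
      rw [e1, hWb] at hz
      have hmem : x₀ - (b - x₀) ∈ Set.Icc a b := ⟨by linarith, by linarith⟩
      have h2 : |W (x₀ - (b - x₀))| ≤ |W x₀| := hmax hmem
      have hB := abs_le.mp h2
      have hA := abs_le.mp hz
      have h5 : |W x₀| ≤ C * (b - x₀) := by
        rcases le_total 0 (W x₀) with hs | hs
        · rw [abs_of_nonneg hs]
          rw [abs_of_nonneg hs] at hB
          linarith [hA.1, hB.2]
        · rw [abs_of_nonpos hs]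
          rw [abs_of_nonpos hs] at hB
          linarith [hA.2, hB.1]
      have h6 : C * (b - x₀) ≤ C / 2 * (b - a) := by nlinarith
      linarith
  exact hxle.trans key

/-- The cross-ratio norm of a normalized Zygmund vector field is bounded by four times
the Zygmund constant: for every quadruple `a < b < c < d` with cross-ratio
`(c−b)(d−a)/((b−a)(d−c)) = 1`, the cross-ratio distortion is at most `4C`. -/
theorem cross_ratio_norm_le_four_zygmund
    (C : ℝ) (hC : 0 < C) (V : ℝ → ℝ)
    (hcont : Continuous V)
    (hzyg : ∀ x : ℝ, ∀ t : ℝ, 0 < t → |V (x + t) + V (x - t) - 2 * V x| ≤ C * t)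
    (h0 : V 0 = 0) (h1 : V 1 = 0)
    (hgrowth : ∃ M R : ℝ, 0 < M ∧ 1 < R ∧
      ∀ x : ℝ, R ≤ |x| → |V x| ≤ M * |x| * Real.log |x|) :
    ∀ a b c d : ℝ, a < b → b < c → c < d →
      (c - b) * (d - a) / ((b - a) * (d - c)) = 1 →
      |(V c - V b) / (c - b) + (V d - V a) / (d - a)
        - (V b - V a) / (b - a) - (V d - V c) / (d - c)| ≤ 4 * C := by
  intro a b c d hab hbc hcd hcr
  have hp : 0 < b - a := by linarith
  have hq : 0 < c - b := by linarith
  have hr : 0 < d - c := by linarith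
  have hL : 0 < d - a := by linarith
  have hca : 0 < c - a := by linarith
  have hdb : 0 < d - b := by linarith
  have hne : (b - a) * (d - c) ≠ 0 := by positivity
  have hcr' : (c - b) * (d - a) = (b - a) * (d - c) := (div_eq_one_iff_eq hne).mp hcr
  -- chord bounds
  have hε₁ := chord_bound_aux C hC.le V hcont hzyg (show a < c by linarith)
    (show b ∈ Set.Icc a c from ⟨hab.le, hbc.le⟩)
  have hε₂ := chord_bound_aux C hC.le V hcont hzyg (show b < d by linarith)
    (show c ∈ Set.Icc b d from ⟨hbc.le, hcd.le⟩)
  set ε₁ : ℝ := V b - V a - ((b - a) / (c - a)) * (V c - V a) with hε₁def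
  set ε₂ : ℝ := V c - V b - ((c - b) / (d - b)) * (V d - V b) with hε₂def
  -- (c-a)(d-b) = 2 (c-b)(d-a)  under the cross-ratio condition
  have hK2 : (c - a) * (d - b) = 2 * ((c - b) * (d - a)) := by linear_combination -hcr'
  -- unconditional decomposition
  have hid0 : (V c - V b) / (c - b) + (V d - V a) / (d - a)
      - (V b - V a) / (b - a) - (V d - V c) / (d - c)
      = (c - a) * (d - b) / (d - a)
        * (ε₂ / ((c - b) * (d - c)) - ε₁ / ((b - a) * (c - b))) := by
    rw [hε₁def, hε₂def]
    field_simp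
    ring
  have hid : (V c - V b) / (c - b) + (V d - V a) / (d - a)
      - (V b - V a) / (b - a) - (V d - V c) / (d - c)
      = 2 * ε₂ / (d - c) - 2 * ε₁ / (b - a) := by
    rw [hid0, hK2]
    field_simp
  rw [hid]
  have habs : |2 * ε₂ / (d - c) - 2 * ε₁ / (b - a)|
      ≤ 2 * |ε₂| / (d - c) + 2 * |ε₁| / (b - a) := by
    have t1 : |2 * ε₂ / (d - c)| = 2 * |ε₂| / (d - c) := by
      rw [abs_div, abs_mul, abs_of_pos hr]
      norm_num
    have t2 : |2 * ε₁ / (b - a)| = 2 * |ε₁| / (b - a) := by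
      rw [abs_div, abs_mul, abs_of_pos hp]
      norm_num
    calc |2 * ε₂ / (d - c) - 2 * ε₁ / (b - a)|
        ≤ |2 * ε₂ / (d - c)| + |2 * ε₁ / (b - a)| := abs_sub _ _
      _ = 2 * |ε₂| / (d - c) + 2 * |ε₁| / (b - a) := by rw [t1, t2]
  have h3 : 2 * |ε₂| / (d - c) ≤ C * (d - b) / (d - c) := by
    apply div_le_div_of_nonneg_right ?_ hr.le
    linarith
  have h4 : 2 * |ε₁| / (b - a) ≤ C * (c - a) / (b - a) := by
    apply div_le_div_of_nonneg_right ?_ hp.le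
    linarith
  have h6 : C * (d - b) / (d - c) + C * (c - a) / (b - a) ≤ 4 * C := by
    rw [div_add_div _ _ (ne_of_gt hr) (ne_of_gt hp), div_le_iff₀ (mul_pos hr hp)]
    nlinarith [hcr', sq_nonneg (c - b), mul_pos hq hL, mul_pos hp hr]
  linarith
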